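/- For any ℓ ≥ 0 and any indices i_1, …, i_ℓ ∈ {1,…,n}, if there exists some j ∈ {1,…,n} whose number of occurrences among i_1, …, i_ℓ is not equal to p, then Δ_n^p ∘ Δ_{n−1}^p ∘ ⋯ ∘ Δ_1^p (θ_{i_1}·θ_{i_2}⋯θ_{i_ℓ}) = 0 in Λ_n(p); that is, the integral (1/(p!)^n)·Δ_n^p ∘ ⋯ ∘ Δ_1^p of the monomial θ_{i_1}⋯θ_{i_ℓ} is nonzero only if every index j ∈ {1,…,n} occurs exactly p times among i_1, …, i_ℓ. -/

import Mathlib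

noncomputable section

open scoped BigOperators

/-- Commutator `[x, y] = x*y - y*x` in an associative ring. -/
def brk {A : Type*} [Ring A] (x y : A) : A := x * y - y * x

/-- Defining relations of the `ℤ₂^p`-graded commutative algebra `Λ_n(p)`:
`θ_i^{(α)}·θ_j^{(β)} = (−1)^{δ_{αβ}}·θ_j^{(β)}·θ_i^{(α)}`. -/
inductive LamRel (n p : ℕ) : FreeAlgebra ℂ (Fin n × Fin p) → FreeAlgebra ℂ (Fin n × Fin p) → Prop
  | comm : ∀ (i j : Fin n) (α β : Fin p),
      LamRel n p (FreeAlgebra.ι ℂ (i, α) * FreeAlgebra.ι ℂ (j, β))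
        ((if α = β then (-1 : ℂ) else 1) • (FreeAlgebra.ι ℂ (j, β) * FreeAlgebra.ι ℂ (i, α)))

/-- The algebra `Λ_n(p)`. -/
abbrev Lam (n p : ℕ) : Type := RingQuot (LamRel n p)

/-- The generators `θ_i^{(α)}` of `Λ_n(p)`. -/
def θc (n p : ℕ) (i : Fin n) (α : Fin p) : Lam n p :=
  RingQuot.mkAlgHom ℂ (LamRel n p) (FreeAlgebra.ι ℂ (i, α))

/-- `θ_i = Σ_{α=1}^p θ_i^{(α)}`. -/
def θv (n p : ℕ) (i : Fin n) : Lam n p := ∑ α : Fin p, θc n p i α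

/-- The inhomogeneous subalgebra `IΛ_n(p)` generated by `θ_1, …, θ_n`. -/
def ILam (n p : ℕ) : Subalgebra ℂ (Lam n p) :=
  Algebra.adjoin ℂ (Set.range (θv n p))

/-- `Δ_i = Σ_{α=1}^p ∂_i^{(α)}`. -/
def Δop (n p : ℕ) (Dp : Fin n → Fin p → Module.End ℂ (Lam n p)) (i : Fin n) :
    Module.End ℂ (Lam n p) := ∑ α : Fin p, Dp i α

namespace Stmt16

open Polynomial

variable {n p : ℕ}

/-- Single generator of `Λ_n(p)`. -/
def gen (n p : ℕ) (g : Fin n × Fin p) : Lam n p := θc n p g.1 g.2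

lemma gen_comm (g h : Fin n × Fin p) :
    gen n p g * gen n p h = (if g.2 = h.2 then (-1 : ℂ) else 1) • (gen n p h * gen n p g) := by
  have h1 := RingQuot.mkAlgHom_rel ℂ (LamRel.comm (n := n) (p := p) g.1 h.1 g.2 h.2)
  rw [map_mul, map_smul, map_mul] at h1
  exact h1

lemma gen_sq (g : Fin n × Fin p) : gen n p g * gen n p g = 0 := by
  have h1 := gen_comm g g
  rw [if_pos rfl] at h1
  linear_combination (norm := module) ((2 : ℂ)⁻¹) • h1

/-- Product of a word of generators. -/
def wprod (n p : ℕ) (L : List (Fin n × Fin p)) : Lam n p := (L.map (gen n p)).prod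

@[simp] lemma wprod_nil : wprod n p [] = 1 := rfl

@[simp] lemma wprod_cons (g : Fin n × Fin p) (L : List (Fin n × Fin p)) :
    wprod n p (g :: L) = gen n p g * wprod n p L := by simp [wprod]

lemma gen_mul_wprod_of_mem {g : Fin n × Fin p} {L : List (Fin n × Fin p)} (hg : g ∈ L) :
    gen n p g * wprod n p L = 0 := by
  induction L with
  | nil => simp at hg
  | cons h t ih =>
    rcases List.mem_cons.mp hg with rfl | hmem
    · rw [wprod_cons, ← mul_assoc, gen_sq, zero_mul]
    · rw [wprod_cons, ← mul_assoc, gen_comm, smul_mul_assoc, mul_assoc, ih hmem, mul_zero,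
        smul_zero]

lemma wprod_eq_zero_of_not_nodup {L : List (Fin n × Fin p)} (hL : ¬ L.Nodup) :
    wprod n p L = 0 := by
  induction L with
  | nil => simp at hL
  | cons h t ih =>
    rw [List.nodup_cons] at hL
    push_neg at hL
    by_cases hm : h ∈ t
    · rw [wprod_cons, gen_mul_wprod_of_mem hm]
    · rw [wprod_cons, ih (hL hm), mul_zero]

lemma mem_span_wprod (x : Lam n p) :
    x ∈ Submodule.span ℂ (Set.range (wprod n p)) := by
  have hmul : ∀ x y : Lam n p, x ∈ Submodule.span ℂ (Set.range (wprod n p)) →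
      y ∈ Submodule.span ℂ (Set.range (wprod n p)) →
      x * y ∈ Submodule.span ℂ (Set.range (wprod n p)) := by
    intro x y hx hy
    induction hx using Submodule.span_induction with
    | mem a ha =>
      obtain ⟨L, rfl⟩ := ha
      induction hy using Submodule.span_induction with
      | mem b hb =>
        obtain ⟨M, rfl⟩ := hb
        refine Submodule.subset_span ⟨L ++ M, ?_⟩
        simp [wprod, List.map_append]
      | zero => simp
      | add u v hu hv hu' hv' => rw [mul_add]; exact Submodule.add_mem _ hu' hv'
      | smul c u hu hu' => rw [mul_smul_comm]; exact Submodule.smul_mem _ _ hu'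
    | zero => simp
    | add u v hu hv hu' hv' => rw [add_mul]; exact Submodule.add_mem _ hu' hv'
    | smul c u hu hu' => rw [smul_mul_assoc]; exact Submodule.smul_mem _ _ hu'
  obtain ⟨a, rfl⟩ := RingQuot.mkAlgHom_surjective ℂ (LamRel n p) x
  induction a using FreeAlgebra.induction with
  | grade0 r =>
    rw [AlgHom.commutes]
    have : (algebraMap ℂ (Lam n p)) r = r • wprod n p [] := by
      simp [Algebra.algebraMap_eq_smul_one]
    rw [this]
    exact Submodule.smul_mem _ _ (Submodule.subset_span ⟨[], rfl⟩)
  | grade1 g =>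
    refine Submodule.subset_span ⟨[g], ?_⟩
    simp [wprod, gen, θc]
  | mul a b ha hb => rw [map_mul]; exact hmul _ _ ha hb
  | add a b ha hb => rw [map_add]; exact Submodule.add_mem _ ha hb

/-! ### The grading homomorphism -/

/-- `1` if `i = j`, else `0`: the `j`-degree of a generator with first index `i`. -/
def dj (j i : Fin n) : ℕ := if i = j then 1 else 0

lemma C_mul_X_pow_mul (a b : Lam n p) (e f : ℕ) :
    (C a * X ^ e) * (C b * X ^ f) = C (a * b) * X ^ (e + f) := by
  rw [mul_assoc (C a), ← mul_assoc (X ^ e), X_pow_mul, mul_assoc (C b), ← pow_add,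
    ← mul_assoc, ← C_mul]

/-- The free-algebra version of the `j`-grading map. -/
def ΦF (n p : ℕ) (j : Fin n) : FreeAlgebra ℂ (Fin n × Fin p) →ₐ[ℂ] Polynomial (Lam n p) :=
  FreeAlgebra.lift ℂ (fun g => C (gen n p g) * X ^ (dj j g.1))

lemma ΦF_rel (n p : ℕ) (j : Fin n) : ∀ ⦃x y⦄, LamRel n p x y → ΦF n p j x = ΦF n p j y := by
  rintro _ _ ⟨i, i', α, β⟩
  rw [map_mul, map_smul, map_mul]
  show (ΦF n p j (FreeAlgebra.ι ℂ (i, α))) * (ΦF n p j (FreeAlgebra.ι ℂ (i', β))) = _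
  simp only [ΦF, FreeAlgebra.lift_ι_apply]
  rw [C_mul_X_pow_mul, C_mul_X_pow_mul]
  rw [gen_comm (n := n) (p := p) (i, α) (i', β), ← Polynomial.smul_C, smul_mul_assoc,
    add_comm (dj j i)]

/-- The `j`-grading homomorphism `Λ_n(p) → Λ_n(p)[X]`. -/
def Φ (n p : ℕ) (j : Fin n) : Lam n p →ₐ[ℂ] Polynomial (Lam n p) :=
  RingQuot.liftAlgHom ℂ ⟨ΦF n p j, ΦF_rel n p j⟩

lemma Φ_gen (j : Fin n) (g : Fin n × Fin p) :
    Φ n p j (gen n p g) = C (gen n p g) * X ^ (dj j g.1) := by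
  show Φ n p j (RingQuot.mkAlgHom ℂ (LamRel n p) (FreeAlgebra.ι ℂ g)) = _
  rw [Φ, RingQuot.liftAlgHom_mkAlgHom_apply]
  simp [ΦF, FreeAlgebra.lift_ι_apply]

lemma Φ_θc (j : Fin n) (i : Fin n) (α : Fin p) :
    Φ n p j (θc n p i α) = C (θc n p i α) * X ^ (dj j i) := Φ_gen j (i, α)

/-- Evaluation at `X = 1`, a left inverse of `Φ`. -/
def ev (n p : ℕ) : Polynomial (Lam n p) →ₐ[ℂ] Lam n p :=
  Polynomial.eval₂AlgHom (AlgHom.id ℂ (Lam n p)) 1 fun a => Commute.one_right a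

lemma ev_C (a : Lam n p) : ev n p (C a) = a := eval₂_C _ _

lemma ev_X : ev n p X = 1 := eval₂_X _ _

lemma ev_Φ (j : Fin n) (x : Lam n p) : ev n p (Φ n p j x) = x := by
  have h : (ev n p).comp (Φ n p j) = AlgHom.id ℂ (Lam n p) := by
    apply RingQuot.ringQuot_ext'
    apply FreeAlgebra.hom_ext
    funext g
    show ev n p (Φ n p j (RingQuot.mkAlgHom ℂ (LamRel n p) (FreeAlgebra.ι ℂ g))) = _
    rw [show (RingQuot.mkAlgHom ℂ (LamRel n p) (FreeAlgebra.ι ℂ g)) = gen n p g from rfl,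
      Φ_gen, map_mul, map_pow, ev_C, ev_X, one_pow, mul_one]
    rfl
  exact DFunLike.congr_fun h x

lemma Φ_θv (j i : Fin n) : Φ n p j (θv n p i) = C (θv n p i) * X ^ (dj j i) := by
  rw [θv, map_sum]
  simp only [Φ_θc]
  rw [← Finset.sum_mul, ← map_sum C _ Finset.univ]

/-- Image of a monomial in the `θ_i` under `Φ`. -/
lemma Φ_theta_word (j : Fin n) (L : List (Fin n)) :
    Φ n p j ((L.map (θv n p)).prod) = C ((L.map (θv n p)).prod) * X ^ (L.count j) := by
  induction L with
  | nil => simp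
  | cons i t ih =>
    rw [List.map_cons, List.prod_cons, map_mul, Φ_θv, ih, C_mul_X_pow_mul,
      ← List.prod_cons, ← List.map_cons]
    congr 1
    rw [List.count_cons, dj]
    by_cases hij : i = j
    · simp [hij, Nat.add_comm]
    · simp [hij]

lemma count_ofFn {ℓ : ℕ} (js : Fin ℓ → Fin n) (j : Fin n) :
    (List.ofFn js).count j = (Finset.univ.filter fun k => js k = j).card := by
  induction ℓ with
  | zero => simp
  | succ m ih =>
    rw [List.ofFn_succ, List.count_cons, ih]
    have hc : (Finset.univ.filter fun k => js k = j).card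
        = (if js 0 = j then 1 else 0) + (Finset.univ.filter fun k : Fin m => js k.succ = j).card := by
      rw [Finset.card_filter, Finset.card_filter, Fin.sum_univ_succ]
    rw [hc]
    by_cases h0 : js 0 = j
    · simp [h0, Nat.add_comm]
    · simp [h0]

/-! ### Monomials with a highly repeated index vanish -/

lemma theta_word_mem_span (L : List (Fin n)) :
    (L.map (θv n p)).prod ∈
      Submodule.span ℂ (wprod n p '' {M | M.map Prod.fst = L}) := by
  induction L with
  | nil =>
    apply Submodule.subset_span
    exact ⟨[], rfl, rfl⟩
  | cons i t ih =>
    rw [List.map_cons, List.prod_cons, θv, Finset.sum_mul]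
    apply Submodule.sum_mem
    intro α _
    have h1 : θc n p i α * (t.map (θv n p)).prod ∈
        Submodule.map (LinearMap.mulLeft ℂ (θc n p i α))
          (Submodule.span ℂ (wprod n p '' {M | M.map Prod.fst = t})) :=
      ⟨_, ih, rfl⟩
    rw [Submodule.map_span] at h1
    refine Submodule.span_le.mpr ?_ h1
    rintro _ ⟨_, ⟨M, hM, rfl⟩, rfl⟩
    apply Submodule.subset_span
    refine ⟨(i, α) :: M, ?_, ?_⟩
    · simp only [Set.mem_setOf_eq] at hM ⊢
      simp [hM]
    · simp [wprod_cons, gen]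

lemma theta_word_eq_zero (j : Fin n) (L : List (Fin n)) (h : p < L.count j) :
    (L.map (θv n p)).prod = 0 := by
  have hmem := theta_word_mem_span (n := n) (p := p) L
  have hbot : Submodule.span ℂ (wprod n p '' {M | M.map Prod.fst = L}) = ⊥ := by
    rw [Submodule.span_eq_bot]
    rintro _ ⟨M, hM, rfl⟩
    simp only [Set.mem_setOf_eq] at hM
    apply wprod_eq_zero_of_not_nodup
    intro hnd
    set F := M.filter (fun g => g.1 == j) with hF
    have hlen : F.length = L.count j := by
      rw [← hM, List.count_eq_countP, List.countP_map, List.countP_eq_length_filter, hF]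
      rfl
    have hnodup : (F.map Prod.snd).Nodup := by
      refine List.Nodup.map_on ?_ (hnd.filter _)
      intro x hx y hy hxy
      have hx1 : x.1 = j := by
        have := List.of_mem_filter hx
        simpa using this
      have hy1 : y.1 = j := by
        have := List.of_mem_filter hy
        simpa using this
      exact Prod.ext (hx1.trans hy1.symm) hxy
    have hle := hnodup.length_le_card
    rw [List.length_map, Fintype.card_fin] at hle
    omega
  rw [hbot] at hmem
  simpa using hmem

/-! ### The derivations lower the `j`-degree by one -/

section Dops

variable (Dp : Fin n → Fin p → Module.End ℂ (Lam n p))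

lemma D_theta
    (hD2 : ∀ (i j : Fin n) (α β : Fin p),
      Dp i α * LinearMap.mulLeft ℂ (θc n p j β)
          - (if α = β then (-1 : ℂ) else 1) • (LinearMap.mulLeft ℂ (θc n p j β) * Dp i α)
        = if i = j ∧ α = β then 1 else 0)
    (i i' : Fin n) (α β : Fin p) (x : Lam n p) :
    Dp i α (θc n p i' β * x)
      = (if α = β then (-1 : ℂ) else 1) • (θc n p i' β * Dp i α x)
        + (if i = i' ∧ α = β then x else 0) := by
  have h := LinearMap.congr_fun (hD2 i i' α β) x
  simp only [LinearMap.sub_apply, Module.End.mul_apply, LinearMap.smul_apply,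
    LinearMap.mulLeft_apply] at h
  have h2 : ((if i = i' ∧ α = β then (1 : Module.End ℂ (Lam n p)) else 0)) x
      = (if i = i' ∧ α = β then x else 0) := by
    split <;> simp
  rw [h2] at h
  rw [eq_add_of_sub_eq h, add_comm]

lemma coeff_C_mul_X_pow_mul (a : Lam n p) (e : ℕ) (Q : Polynomial (Lam n p)) (k : ℕ) :
    (C a * X ^ e * Q).coeff k = a * (if e ≤ k then Q.coeff (k - e) else 0) := by
  rw [mul_assoc, X_pow_mul, ← mul_assoc, coeff_mul_X_pow', coeff_C_mul, mul_ite, mul_zero]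

lemma coeff_Φ_cons (j : Fin n) (g : Fin n × Fin p) (t : List (Fin n × Fin p)) (k : ℕ) :
    (Φ n p j (wprod n p (g :: t))).coeff k
      = θc n p g.1 g.2 *
          (if dj j g.1 ≤ k then (Φ n p j (wprod n p t)).coeff (k - dj j g.1) else 0) := by
  rw [wprod_cons, map_mul, Φ_gen, coeff_C_mul_X_pow_mul]
  rfl

lemma shift_D_word
    (hD1 : ∀ (i : Fin n) (α : Fin p), Dp i α (1 : Lam n p) = 0)
    (hD2 : ∀ (i j : Fin n) (α β : Fin p),
      Dp i α * LinearMap.mulLeft ℂ (θc n p j β)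
          - (if α = β then (-1 : ℂ) else 1) • (LinearMap.mulLeft ℂ (θc n p j β) * Dp i α)
        = if i = j ∧ α = β then 1 else 0)
    (j : Fin n) (L : List (Fin n × Fin p)) :
    (∀ (i : Fin n) (α : Fin p) (k : ℕ),
        (Φ n p j (Dp i α (wprod n p L))).coeff k
          = Dp i α ((Φ n p j (wprod n p L)).coeff (k + dj j i)))
      ∧ ∀ α : Fin p, Dp j α ((Φ n p j (wprod n p L)).coeff 0) = 0 := by
  induction L with
  | nil =>
    constructor
    · intro i α k
      rw [wprod_nil, hD1, map_zero, Polynomial.coeff_zero, map_one, Polynomial.coeff_one]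
      split_ifs with hk
      · exact (hD1 i α).symm
      · exact (map_zero _).symm
    · intro α
      rw [wprod_nil, map_one, Polynomial.coeff_one, if_pos rfl, hD1]
  | cons g t ihL =>
    obtain ⟨ih1, ih2⟩ := ihL
    constructor
    · intro i α k
      have hL : Dp i α (wprod n p (g :: t))
          = (if α = g.2 then (-1 : ℂ) else 1) • (θc n p g.1 g.2 * Dp i α (wprod n p t))
            + (if i = g.1 ∧ α = g.2 then wprod n p t else 0) := by
        rw [wprod_cons]
        exact D_theta Dp hD2 i g.1 α g.2 (wprod n p t)
      rw [hL, map_add, map_smul, map_mul, Φ_θc, apply_ite (Φ n p j), map_zero,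
        Polynomial.coeff_add, Polynomial.coeff_smul, coeff_C_mul_X_pow_mul,
        apply_ite (fun q : Polynomial (Lam n p) => q.coeff k), Polynomial.coeff_zero,
        coeff_Φ_cons, D_theta Dp hD2 i g.1 α g.2]
      by_cases hg : g.1 = j
      · have he : dj j g.1 = 1 := by simp [dj, hg]
        by_cases hi : i = j
        · have hs : dj j i = 1 := by simp [dj, hi]
          rw [he, hs, if_pos (by omega : 1 ≤ k + 1), Nat.add_sub_cancel]
          rcases Nat.eq_zero_or_pos k with rfl | hk
          · rw [if_neg (by omega : ¬ (1 : ℕ) ≤ 0), hi, ih2 α]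
          · rw [if_pos (show (1 : ℕ) ≤ k from hk), ih1 i α (k - 1), hs,
              Nat.sub_add_cancel hk]
        · have hs : dj j i = 0 := by simp [dj, hi]
          have hδ : ¬ (i = g.1 ∧ α = g.2) := fun hc => hi (hc.1.trans hg)
          rw [he, hs, Nat.add_zero, if_neg hδ, if_neg hδ, add_zero, add_zero]
          rcases Nat.eq_zero_or_pos k with rfl | hk
          · rw [if_neg (by omega : ¬ (1 : ℕ) ≤ 0), if_neg (by omega : ¬ (1 : ℕ) ≤ 0), map_zero]
          · rw [if_pos (show (1 : ℕ) ≤ k from hk), if_pos (show (1 : ℕ) ≤ k from hk),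
              ih1 i α (k - 1), hs, Nat.add_zero]
      · have he : dj j g.1 = 0 := by simp [dj, hg]
        rw [he, if_pos (Nat.zero_le _), if_pos (Nat.zero_le _), Nat.sub_zero, Nat.sub_zero,
          ih1 i α k]
        by_cases hδ : i = g.1 ∧ α = g.2
        · have hs : dj j i = 0 := by
            simp [dj, show i ≠ j from fun h => hg (hδ.1.symm.trans h)]
          rw [hs, Nat.add_zero]
        · rw [if_neg hδ, if_neg hδ]
    · intro α
      rw [coeff_Φ_cons]
      by_cases hg : g.1 = j
      · rw [show dj j g.1 = 1 from by simp [dj, hg], if_neg (by omega : ¬ (1 : ℕ) ≤ 0),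
          mul_zero, map_zero]
      · rw [show dj j g.1 = 0 from by simp [dj, hg], if_pos (Nat.zero_le _), Nat.sub_zero,
          D_theta Dp hD2 j g.1 α g.2, ih2 α, mul_zero, smul_zero, zero_add,
          if_neg (show ¬ (j = g.1 ∧ α = g.2) from fun hc => hg hc.1.symm)]

end Dops

/-! ### Shift property and its stability -/

/-- `E` maps the `j`-degree `k + s` part into the `j`-degree `k` part. -/
def ShiftP (j : Fin n) (E : Module.End ℂ (Lam n p)) (s : ℕ) : Prop :=
  ∀ (x : Lam n p) (k : ℕ), (Φ n p j (E x)).coeff k = E ((Φ n p j x).coeff (k + s))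

section Dops2

variable (Dp : Fin n → Fin p → Module.End ℂ (Lam n p))

lemma shift_D
    (hD1 : ∀ (i : Fin n) (α : Fin p), Dp i α (1 : Lam n p) = 0)
    (hD2 : ∀ (i j : Fin n) (α β : Fin p),
      Dp i α * LinearMap.mulLeft ℂ (θc n p j β)
          - (if α = β then (-1 : ℂ) else 1) • (LinearMap.mulLeft ℂ (θc n p j β) * Dp i α)
        = if i = j ∧ α = β then 1 else 0)
    (j i : Fin n) (α : Fin p) : ShiftP j (Dp i α) (dj j i) := by
  intro x k
  induction mem_span_wprod x using Submodule.span_induction with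
  | mem a ha =>
    obtain ⟨L, rfl⟩ := ha
    exact (shift_D_word Dp hD1 hD2 j L).1 i α k
  | zero => simp
  | add u v hu hv hu' hv' => simp [map_add, Polynomial.coeff_add, hu', hv']
  | smul c u hu hu' => simp [map_smul, Polynomial.coeff_smul, hu']

end Dops2

lemma shiftP_sum (j : Fin n) {ι : Type*} (s : Finset ι)
    (E : ι → Module.End ℂ (Lam n p)) (d : ℕ) (h : ∀ c ∈ s, ShiftP j (E c) d) :
    ShiftP j (∑ c ∈ s, E c) d := by
  intro x k
  rw [LinearMap.sum_apply, map_sum, Polynomial.finset_sum_coeff, LinearMap.sum_apply]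
  exact Finset.sum_congr rfl fun c hc => h c hc x k

lemma shiftP_one (j : Fin n) : ShiftP j (1 : Module.End ℂ (Lam n p)) 0 := by
  intro x k
  simp [Module.End.one_apply]

lemma shiftP_mul (j : Fin n) {E E' : Module.End ℂ (Lam n p)} {s s' : ℕ}
    (hE : ShiftP j E s) (hE' : ShiftP j E' s') : ShiftP j (E * E') (s + s') := by
  intro x k
  rw [Module.End.mul_apply, hE (E' x) k, hE' x (k + s), Module.End.mul_apply, Nat.add_assoc]

lemma shiftP_pow (j : Fin n) {E : Module.End ℂ (Lam n p)} {s : ℕ} (hE : ShiftP j E s)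
    (m : ℕ) : ShiftP j (E ^ m) (m * s) := by
  induction m with
  | zero => rw [pow_zero, Nat.zero_mul]; exact shiftP_one j
  | succ m ih =>
    rw [pow_succ, Nat.succ_mul]
    exact shiftP_mul j ih hE

lemma shiftP_list_prod (j : Fin n) {ι : Type*} (L : List ι)
    (E : ι → Module.End ℂ (Lam n p)) (d : ι → ℕ)
    (h : ∀ c ∈ L, ShiftP j (E c) (d c)) :
    ShiftP j ((L.map E).prod) ((L.map d).sum) := by
  induction L with
  | nil => simpa using shiftP_one j
  | cons c t ih =>
    rw [List.map_cons, List.prod_cons, List.map_cons, List.sum_cons]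
    exact shiftP_mul j (h c (List.mem_cons_self (a := c) (l := t))) (ih fun c' hc' => h c' (List.mem_cons_of_mem _ hc'))

lemma shift_Δ (Dp : Fin n → Fin p → Module.End ℂ (Lam n p))
    (hD1 : ∀ (i : Fin n) (α : Fin p), Dp i α (1 : Lam n p) = 0)
    (hD2 : ∀ (i j : Fin n) (α β : Fin p),
      Dp i α * LinearMap.mulLeft ℂ (θc n p j β)
          - (if α = β then (-1 : ℂ) else 1) • (LinearMap.mulLeft ℂ (θc n p j β) * Dp i α)
        = if i = j ∧ α = β then 1 else 0)
    (j i : Fin n) : ShiftP j (Δop n p Dp i) (dj j i) :=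
  shiftP_sum j Finset.univ (Dp i) (dj j i) fun α _ => shift_D Dp hD1 hD2 j i α

end Stmt16

open Stmt16 in
/-- If some index `j` does not occur exactly `p` times among
`i_1, …, i_ℓ`, then `Δ_n^p ∘ ⋯ ∘ Δ_1^p (θ_{i_1}⋯θ_{i_ℓ}) = 0` in `Λ_n(p)`. -/
theorem stmt_16 (n p : ℕ) (hn : 0 < n) (hp : 0 < p)
    (Dp : Fin n → Fin p → Module.End ℂ (Lam n p))
    (hD1 : ∀ (i : Fin n) (α : Fin p), Dp i α (1 : Lam n p) = 0)
    (hD2 : ∀ (i j : Fin n) (α β : Fin p),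
      Dp i α * LinearMap.mulLeft ℂ (θc n p j β)
          - (if α = β then (-1 : ℂ) else 1) • (LinearMap.mulLeft ℂ (θc n p j β) * Dp i α)
        = if i = j ∧ α = β then 1 else 0)
    (hD3 : ∀ (i j : Fin n) (α β : Fin p),
      Dp i α * Dp j β = (if α = β then (-1 : ℂ) else 1) • (Dp j β * Dp i α))
    (ℓ : ℕ) (js : Fin ℓ → Fin n)
    (h : ∃ j : Fin n, (Finset.univ.filter fun k => js k = j).card ≠ p) :
    (List.ofFn fun t : Fin n => Δop n p Dp t.rev ^ p).prod
        ((List.ofFn fun k => θv n p (js k)).prod) = 0 := by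
  obtain ⟨j, hj⟩ := h
  have hm : (List.ofFn fun k => θv n p (js k)) = (List.ofFn js).map (θv n p) :=
    (List.map_ofFn (f := js) (g := θv n p)).symm
  rw [hm]
  rw [← count_ofFn js j] at hj
  rcases lt_or_gt_of_ne hj with hlt | hgt
  · -- j occurs fewer than p times: use the grading
    set F : Module.End ℂ (Lam n p) :=
      (List.ofFn fun t : Fin n => Δop n p Dp t.rev ^ p).prod with hFdef
    set m : Lam n p := ((List.ofFn js).map (θv n p)).prod with hmdef
    have hF : ShiftP j F p := by
      have h1 : ShiftP j F (((List.finRange n).map fun t : Fin n => p * dj j t.rev).sum) := by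
        rw [hFdef, List.ofFn_eq_map]
        exact shiftP_list_prod j (List.finRange n) (fun t => Δop n p Dp t.rev ^ p)
          (fun t => p * dj j t.rev)
          (fun t _ => shiftP_pow j (shift_Δ Dp hD1 hD2 j t.rev) p)
      have h2 : (((List.finRange n).map fun t : Fin n => p * dj j t.rev).sum) = p := by
        rw [← Fin.sum_univ_def]
        have h3 : ∀ t : Fin n, p * dj j t.rev = if t = j.rev then p else 0 := by
          intro t
          rw [dj]
          by_cases ht : t = j.rev
          · rw [if_pos (by rw [ht, Fin.rev_rev]), if_pos ht, Nat.mul_one]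
          · rw [if_neg (fun hr => ht (by rw [← hr, Fin.rev_rev])), if_neg ht, Nat.mul_zero]
        simp_rw [h3]
        rw [Finset.sum_ite_eq' Finset.univ j.rev fun _ => p, if_pos (Finset.mem_univ _)]
      rwa [h2] at h1
    have hΦzero : Φ n p j (F m) = 0 := by
      apply Polynomial.ext
      intro k
      rw [hF m k, Φ_theta_word j (List.ofFn js), Polynomial.coeff_zero,
        Polynomial.coeff_C_mul, Polynomial.coeff_X_pow, if_neg (by omega), mul_zero, map_zero]
    calc F m = ev n p (Φ n p j (F m)) := (ev_Φ j _).symm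
      _ = 0 := by rw [hΦzero, map_zero]
  · -- j occurs more than p times: the monomial itself vanishes
    rw [theta_word_eq_zero j (List.ofFn js) hgt, map_zero]
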